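/- The function ψ₁(x) = x·exp(-(3/16)x² + (1/8)x⁴ - (1/6)x⁶) satisfies -ψ₁''(x) + ((169/64)x² - (59/8)x⁴ + x⁶ - x⁸ + x¹⁰)ψ₁(x) = (9/8)ψ₁(x) for all real x. -/

import Mathlib

noncomputable def Pfun (x : ℝ) : ℝ := -(3/16) * x ^ 2 + (1/8) * x ^ 4 - (1/6) * x ^ 6

lemma hP (x : ℝ) : HasDerivAt Pfun (-(3/8)*x + (1/2)*x^3 - x^5) x := by
  have h : HasDerivAt (fun x : ℝ => -(3/16) * x ^ 2 + (1/8) * x ^ 4 - (1/6) * x ^ 6)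
      (-(3/16) * (2 * x ^ 1) + (1/8) * (4 * x ^ 3) - (1/6) * (6 * x ^ 5)) x := by
    exact (((hasDerivAt_pow 2 x).const_mul _).add ((hasDerivAt_pow 4 x).const_mul _)).sub
      ((hasDerivAt_pow 6 x).const_mul _)
  refine h.congr_deriv ?_
  try simp only [id_eq]
  try ring

lemma hPsi (x : ℝ) :
    HasDerivAt (fun x => x * Real.exp (Pfun x))
      ((1 + x * (-(3/8)*x + (1/2)*x^3 - x^5)) * Real.exp (Pfun x)) x := by
  have h := (hasDerivAt_id x).mul (hP x).exp
  refine h.congr_deriv ?_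
  try simp only [id_eq]
  try ring

lemma hPsi' (x : ℝ) :
    HasDerivAt (fun x => (1 + x * (-(3/8)*x + (1/2)*x^3 - x^5)) * Real.exp (Pfun x))
      ((-(3/4)*x + x^3 - 2*x^5 + x*(-(3/8) + (3/2)*x^2 - 5*x^4)
        + x*(-(3/8)*x + (1/2)*x^3 - x^5)^2) * Real.exp (Pfun x)) x := by
  have h1 : HasDerivAt (fun x : ℝ => 1 + x * (-(3/8)*x + (1/2)*x^3 - x^5))
      ((-(3/8)*x + (1/2)*x^3 - x^5) + x * (-(3/8) + (1/2)*(3*x^2) - 5*x^4)) x := by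
    have hq : HasDerivAt (fun x : ℝ => -(3/8)*x + (1/2)*x^3 - x^5)
        (-(3/8)*1 + (1/2)*(3*x^2) - 5*x^4) x := by
      have := (((hasDerivAt_id x).const_mul (-(3/8) : ℝ)).add
        ((hasDerivAt_pow 3 x).const_mul ((1/2 : ℝ)))).sub (hasDerivAt_pow 5 x)
      refine this.congr_deriv ?_
      try simp only [id_eq]
      try ring
    have := (hasDerivAt_const x (1:ℝ)).add ((hasDerivAt_id x).mul hq)
    refine this.congr_deriv ?_
    try simp only [id_eq]
    try ring
  have h := h1.mul (hP x).exp
  refine h.congr_deriv ?_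
  try simp only [id_eq]
  try ring

theorem decatic_example_first_excited_state
    (ψ : ℝ → ℝ)
    (hψ : ψ = fun x => x * Real.exp (-(3/16) * x ^ 2 + (1/8) * x ^ 4 - (1/6) * x ^ 6)) :
    ∀ x : ℝ, -(deriv (deriv ψ) x)
      + ((169/64) * x ^ 2 - (59/8) * x ^ 4 + x ^ 6 - x ^ 8 + x ^ 10) * ψ x
      = (9/8) * ψ x := by
  intro x
  have hψP : ψ = fun x => x * Real.exp (Pfun x) := by rw [hψ]; rfl
  have hd1 : deriv ψ = fun x => (1 + x * (-(3/8)*x + (1/2)*x^3 - x^5)) * Real.exp (Pfun x) := by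
    funext y
    rw [hψP]
    exact (hPsi y).deriv
  have hd2 : deriv (deriv ψ) x = (-(3/4)*x + x^3 - 2*x^5 + x*(-(3/8) + (3/2)*x^2 - 5*x^4)
      + x*(-(3/8)*x + (1/2)*x^3 - x^5)^2) * Real.exp (Pfun x) := by
    rw [hd1]
    exact (hPsi' x).deriv
  rw [hd2, hψP]
  ring
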